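/- Let d ≥ 2 and t ≥ 1. Every finite collection of boxes in ℝ^d — isometric images of closed axis-aligned rectangular boxes, not necessarily axis-aligned — each having aspect ratio (largest side length divided by smallest side length) at most t, is (3t√d)^d-fat. -/

import Mathlib

open Classical

/-- A tree decomposition of a graph `G`. -/
structure TreeDecomp {V : Type*} (G : SimpleGraph V) where
  ι : Type
  fin : Fintype ι
  T : SimpleGraph ι
  isTree : T.IsTree
  bag : ι → Set V
  mem_bag : ∀ v : V, ∃ t, v ∈ bag t
  edge_bag : ∀ ⦃u v : V⦄, G.Adj u v → ∃ t, u ∈ bag t ∧ v ∈ bag t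
  bag_connected : ∀ v : V, (T.induce {t | v ∈ bag t}).Connected

/-- `I` is an independent set of `G` contained in `S`, i.e. an independent set of `G[S]`. -/
def IsIndepSetIn {V : Type*} (G : SimpleGraph V) (S : Set V) (I : Finset V) : Prop :=
  ↑I ⊆ S ∧ ∀ u ∈ I, ∀ v ∈ I, u ≠ v → ¬ G.Adj u v

/-- `α(G[S]) ≤ k`. -/
def IndepLE {V : Type*} (G : SimpleGraph V) (S : Set V) (k : ℕ) : Prop :=
  ∀ I : Finset V, IsIndepSetIn G S I → I.card ≤ k

/-- The independence number of the tree decomposition is at most `k`. -/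
def TreeDecomp.IndepNumLE {V : Type*} {G : SimpleGraph V} (td : TreeDecomp G) (k : ℕ) : Prop :=
  ∀ t : td.ι, IndepLE G (td.bag t) k

/-- The tree-independence number of `G` is at most `k`. -/
def treeAlphaLE {V : Type*} (G : SimpleGraph V) (k : ℕ) : Prop :=
  ∃ td : TreeDecomp G, td.IndepNumLE k

/-- The tree-independence number of `G`. -/
noncomputable def treeAlpha {V : Type*} (G : SimpleGraph V) : ℕ :=
  sInf {k | treeAlphaLE G k}

/-- A layering of `G`, encoded by the function sending a vertex to the index of its layer. -/
def IsLayering {V : Type*} (G : SimpleGraph V) (L : V → ℕ) : Prop :=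
  ∀ ⦃u v : V⦄, G.Adj u v → (L u : ℤ) ≤ (L v : ℤ) + 1

/-- The layered tree-independence number of `G` is at most `k`. -/
def layeredTreeAlphaLE {V : Type*} (G : SimpleGraph V) (k : ℕ) : Prop :=
  ∃ (td : TreeDecomp G) (L : V → ℕ), IsLayering G L ∧
    ∀ (t : td.ι) (i : ℕ), IndepLE G (td.bag t ∩ {v | L v = i}) k

/-- The layered tree-independence number of `G`. -/
noncomputable def layeredTreeAlpha {V : Type*} (G : SimpleGraph V) : ℕ :=
  sInf {k | layeredTreeAlphaLE G k}

/-- The number of elements of the multiset `𝒞` containing `v` (with multiplicity). -/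
noncomputable def coverCount {V : Type*} (𝒞 : Multiset (Set V)) (v : V) : ℕ :=
  Multiset.countP (fun C => v ∈ C) 𝒞

/-- `𝒞` is a `β`-general cover: every vertex belongs to at least `β·|𝒞|` elements. -/
def IsGeneralCover {V : Type*} (β : ℝ) (𝒞 : Multiset (Set V)) : Prop :=
  𝒞 ≠ 0 ∧ ∀ v : V, β * (Multiset.card 𝒞 : ℝ) ≤ (coverCount 𝒞 v : ℝ)

/-- The intersection graph of an (indexed) family of sets. -/
def intersectionGraph {ι : Type*} {α : Type*} (D : ι → Set α) : SimpleGraph ι where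
  Adj i j := i ≠ j ∧ (D i ∩ D j).Nonempty
  symm := by
    constructor
    rintro i j ⟨hne, x, hx1, hx2⟩
    exact ⟨hne.symm, x, hx2, hx1⟩
  loopless := by
    constructor
    rintro i ⟨hne, -⟩
    exact hne rfl

/-- The `p`-th power of a graph. -/
def gpower {V : Type*} (G : SimpleGraph V) (p : ℕ) : SimpleGraph V where
  Adj u v := u ≠ v ∧ ∃ w : G.Walk u v, w.length ≤ p
  symm := by
    constructor
    rintro u v ⟨hne, w, hw⟩
    exact ⟨hne.symm, w.reverse, by simpa using hw⟩
  loopless := by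
    constructor
    rintro u ⟨hne, -⟩
    exact hne rfl

/-- The axis-aligned closed hypercube of side length `r` with lower corner `x`. -/
def cube (d : ℕ) (x : EuclideanSpace ℝ (Fin d)) (r : ℝ) : Set (EuclideanSpace ℝ (Fin d)) :=
  {y | ∀ i, x i ≤ y i ∧ y i ≤ x i + r}

/-- The size of an object: the side length of its smallest enclosing axis-aligned hypercube. -/
noncomputable def objSize (d : ℕ) (O : Set (EuclideanSpace ℝ (Fin d))) : ℝ :=
  sInf {r : ℝ | 0 ≤ r ∧ ∃ x, O ⊆ cube d x r}

/-- The collection `O` is `c`-fat. -/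
def IsFat {ι : Type*} (d : ℕ) (c : ℝ) (O : ι → Set (EuclideanSpace ℝ (Fin d))) : Prop :=
  ∀ r : ℝ, 0 < r → ∀ x : EuclideanSpace ℝ (Fin d), ∀ P : Finset ι,
    (∀ i ∈ P, ∀ j ∈ P, i ≠ j → Disjoint (O i) (O j)) →
    (∀ i ∈ P, (O i ∩ cube d x r).Nonempty ∧ r ≤ objSize d (O i)) →
    ∃ pts : Finset (EuclideanSpace ℝ (Fin d)),
      (pts.card : ℝ) ≤ c ∧ ∀ i ∈ P, ∃ p ∈ pts, p ∈ O i

/-- The `n`-dimensional grid graph of width `n`. -/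
def gridGraphN (n : ℕ) : SimpleGraph (Fin n → Fin n) where
  Adj a b := ∑ i, ((a i : ℤ) - (b i : ℤ)).natAbs = 1
  symm := by
    constructor
    intro a b h
    try beta_reduce at h ⊢
    rw [← h]
    exact Finset.sum_congr rfl fun i _ => by omega
  loopless := by
    constructor
    intro a h
    simp at h

/-- The grid graph on `ℤ²`. -/
def latticeGraph : SimpleGraph (ℤ × ℤ) where
  Adj p q := (p.1 - q.1).natAbs + (p.2 - q.2).natAbs = 1
  symm := by
    constructor
    intro p q h
    omega
  loopless := by
    constructor
    intro p h
    simp at h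

/-- `P` is (the vertex set of) a path on the integer grid: a finite nonempty subset of `ℤ²`
whose induced subgraph in the grid graph is a path. -/
def IsGridPath (P : Set (ℤ × ℤ)) : Prop :=
  P.Finite ∧ P.Nonempty ∧ (latticeGraph.induce P).IsTree ∧
    ∀ v : P, ((latticeGraph.induce P).neighborSet v).ncard ≤ 2


open MeasureTheory in
lemma stmt12_isomMP {d : ℕ} (f : EuclideanSpace ℝ (Fin d) ≃ᵢ EuclideanSpace ℝ (Fin d)) :
    MeasurePreserving f volume volume := by
  set g := f.toRealAffineIsometryEquiv with hg
  have key : ⇑f = fun y => g.linearIsometryEquiv y + g 0 := by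
    funext y
    have h := g.map_vadd 0 y
    simp only [vadd_eq_add, add_zero] at h
    have h2 : g y = f y := by rw [hg, IsometryEquiv.coeFn_toRealAffineIsometryEquiv]
    rw [← h2, h]
  rw [key]
  exact (measurePreserving_add_right volume (g 0)).comp
    g.linearIsometryEquiv.measurePreserving

open MeasureTheory in
lemma stmt12_volBox {d : ℕ} (a b : Fin d → ℝ) :
    volume {y : EuclideanSpace ℝ (Fin d) | ∀ j, a j ≤ y j ∧ y j ≤ b j}
      = ∏ j, ENNReal.ofReal (b j - a j) := by
  have hset : {y : EuclideanSpace ℝ (Fin d) | ∀ j, a j ≤ y j ∧ y j ≤ b j}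
      = (MeasurableEquiv.toLp 2 (Fin d → ℝ)).symm ⁻¹'
        (Set.univ.pi fun j => Set.Icc (a j) (b j)) := by
    ext y
    simp only [Set.mem_preimage, Set.mem_univ_pi, Set.mem_Icc, Set.mem_setOf_eq]
    exact Iff.rfl
  rw [hset, (EuclideanSpace.volume_preserving_symm_measurableEquiv_toLp (Fin d)).measure_preimage
    (MeasurableSet.univ_pi fun j => measurableSet_Icc).nullMeasurableSet]
  rw [volume_pi_pi]
  simp [Real.volume_Icc]

lemma stmt12_boxMeas {d : ℕ} (a b : Fin d → ℝ) :
    MeasurableSet {y : EuclideanSpace ℝ (Fin d) | ∀ j, a j ≤ y j ∧ y j ≤ b j} := by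
  have hset : {y : EuclideanSpace ℝ (Fin d) | ∀ j, a j ≤ y j ∧ y j ≤ b j}
      = (MeasurableEquiv.toLp 2 (Fin d → ℝ)).symm ⁻¹'
        (Set.univ.pi fun j => Set.Icc (a j) (b j)) := by
    ext y
    simp only [Set.mem_preimage, Set.mem_univ_pi, Set.mem_Icc, Set.mem_setOf_eq]
    exact Iff.rfl
  rw [hset]
  exact (MeasurableEquiv.toLp 2 (Fin d → ℝ)).symm.measurable
    (MeasurableSet.univ_pi fun j => measurableSet_Icc)

lemma stmt12_coordDist {d : ℕ} (y z : EuclideanSpace ℝ (Fin d)) (j : Fin d) :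
    |y j - z j| ≤ dist y z := by
  rw [EuclideanSpace.dist_eq, ← Real.dist_eq]
  rw [show dist (y j) (z j) = Real.sqrt (dist (y j) (z j) ^ 2) from
    (Real.sqrt_sq dist_nonneg).symm]
  refine Real.sqrt_le_sqrt ?_
  exact Finset.single_le_sum (f := fun i => dist (y i) (z i) ^ 2)
    (fun i _ => sq_nonneg _) (Finset.mem_univ j)

lemma stmt12_distBound {d : ℕ} (a b : EuclideanSpace ℝ (Fin d)) (c : ℝ) (hc : 0 ≤ c)
    (h : ∀ j, |a j - b j| ≤ c) : dist a b ≤ Real.sqrt d * c := by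
  rw [EuclideanSpace.dist_eq]
  calc Real.sqrt (∑ j, dist (a j) (b j) ^ 2) ≤ Real.sqrt (∑ _j : Fin d, c ^ 2) := by
        refine Real.sqrt_le_sqrt (Finset.sum_le_sum fun j _ => ?_)
        rw [Real.dist_eq]
        exact pow_le_pow_left₀ (abs_nonneg _) (h j) 2
    _ = Real.sqrt d * c := by
        rw [Finset.sum_const, Finset.card_univ, Fintype.card_fin, nsmul_eq_mul,
          Real.sqrt_mul (Nat.cast_nonneg d), Real.sqrt_sq hc]

/-- Every finite collection of (not necessarily axis-aligned) boxes in `ℝ^d`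
(`d ≥ 2`) with aspect ratio at most `t` is `(3t√d)^d`-fat. -/
theorem stmt12 {ι : Type} [Fintype ι] (d : ℕ) (hd : 2 ≤ d) (t : ℝ) (ht : 1 ≤ t)
    (O : ι → Set (EuclideanSpace ℝ (Fin d)))
    (hbox : ∀ i, ∃ (f : EuclideanSpace ℝ (Fin d) ≃ᵢ EuclideanSpace ℝ (Fin d))
      (lo hi : Fin d → ℝ),
        (∀ j, lo j < hi j) ∧
        (∀ j k, hi j - lo j ≤ t * (hi k - lo k)) ∧
        O i = f '' {y : EuclideanSpace ℝ (Fin d) | ∀ j, lo j ≤ y j ∧ y j ≤ hi j}) :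
    IsFat d ((3 * t * Real.sqrt d) ^ d) O := by
  classical
  intro r hr x P hdisj hmem
  choose f lo hb hlt hasp hOeq using hbox
  have ht0 : (0:ℝ) < t := lt_of_lt_of_le one_pos ht
  have hd0 : (0:ℝ) < Real.sqrt d := Real.sqrt_pos.2 (by
    have : (0:ℕ) < d := by omega
    exact_mod_cast this)
  set u : ℝ := r / (t * Real.sqrt d) with hu_def
  have hu0 : 0 < u := div_pos hr (mul_pos ht0 hd0)
  -- choose witness points
  have hexists : ∀ i, i ∈ P → ∃ pp, pp ∈ O i ∧ pp ∈ cube d x r := by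
    intro i hi
    obtain ⟨pp, h1, h2⟩ := (hmem i hi).1
    exact ⟨pp, h1, h2⟩
  choose p hpO hpc using hexists
  -- preimages in the box
  have hqex : ∀ i (hi : i ∈ P), ∃ q : EuclideanSpace ℝ (Fin d),
      (∀ j, lo i j ≤ q j ∧ q j ≤ hb i j) ∧ f i q = p i hi := by
    intro i hi
    have h := hpO i hi
    rw [hOeq i] at h
    obtain ⟨q, hq1, hq2⟩ := h
    exact ⟨q, hq1, hq2⟩
  choose q hqbox hqf using hqex
  -- every side length is at least u
  have hside : ∀ i, i ∈ P → ∀ k, u ≤ hb i k - lo i k := by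
    intro i hi k
    set s : ℝ := hb i k - lo i k with hs
    have hs0 : 0 ≤ s := le_of_lt (sub_pos.2 (hlt i k))
    set D : ℝ := Real.sqrt d * (t * s) with hD
    have hD0 : 0 ≤ D := mul_nonneg hd0.le (mul_nonneg ht0.le hs0)
    have hdiam : ∀ y ∈ O i, ∀ z ∈ O i, dist y z ≤ D := by
      intro y hy z hz
      rw [hOeq i] at hy hz
      obtain ⟨a, ha, rfl⟩ := hy
      obtain ⟨b, hbm, rfl⟩ := hz
      rw [(f i).dist_eq]
      refine stmt12_distBound a b (t * s) (mul_nonneg ht0.le hs0) ?_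
      intro j
      have h1 : |a j - b j| ≤ hb i j - lo i j := by
        rw [abs_le]
        constructor <;> linarith [(ha j).1, (ha j).2, (hbm j).1, (hbm j).2]
      exact h1.trans (hasp i j k)
    have hne : p i hi ∈ O i := hpO i hi
    have hbdd : ∀ j, BddBelow ((fun y : EuclideanSpace ℝ (Fin d) => y j) '' O i) := by
      intro j
      refine ⟨p i hi j - D, ?_⟩
      rintro v ⟨y, hy, rfl⟩
      have h := (stmt12_coordDist (p i hi) y j).trans (hdiam _ hne _ hy)
      linarith [(abs_le.1 h).2]
    set x' : EuclideanSpace ℝ (Fin d) :=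
      WithLp.toLp 2 (fun j => sInf ((fun y : EuclideanSpace ℝ (Fin d) => y j) '' O i))
      with hx'
    have hsub : O i ⊆ cube d x' D := by
      intro y hy j
      constructor
      · exact csInf_le (hbdd j) ⟨y, hy, rfl⟩
      · have hlow : y j - D ≤ sInf ((fun y : EuclideanSpace ℝ (Fin d) => y j) '' O i) := by
          refine le_csInf ⟨p i hi j, p i hi, hne, rfl⟩ ?_
          rintro v ⟨z, hz, rfl⟩
          have h := (stmt12_coordDist y z j).trans (hdiam _ hy _ hz)
          linarith [(abs_le.1 h).2]
        have : x' j = sInf ((fun y : EuclideanSpace ℝ (Fin d) => y j) '' O i) := rfl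
        linarith
    have hobj : objSize d (O i) ≤ D :=
      csInf_le ⟨0, fun r' hr' => hr'.1⟩ ⟨hD0, x', hsub⟩
    have hrD : r ≤ D := le_trans (hmem i hi).2 hobj
    rw [hu_def, div_le_iff₀ (mul_pos ht0 hd0)]
    have hDe : D = s * (t * Real.sqrt d) := by rw [hD]; ring
    linarith
  -- the small rotated cubes
  set C : ι → Set (EuclideanSpace ℝ (Fin d)) := fun i =>
    if h : i ∈ P then
      f i '' {y : EuclideanSpace ℝ (Fin d) | ∀ j,
        min (q i h j) (hb i j - u) ≤ y j ∧ y j ≤ min (q i h j) (hb i j - u) + u}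
    else ∅ with hC
  set R : ℝ := r + 2 * (u * Real.sqrt d) with hR
  have hR0 : 0 < R := by positivity
  set x' : EuclideanSpace ℝ (Fin d) := WithLp.toLp 2 (fun j => x j - u * Real.sqrt d) with hx'
  have hCsub : ∀ i, i ∈ P → C i ⊆ O i := by
    intro i hi
    rw [hC]
    simp only [dif_pos hi]
    rw [hOeq i]
    refine Set.image_mono ?_
    intro y hy
    intro j
    have h1 := (hy j).1
    have h2 := (hy j).2
    have h3 := hside i hi j
    have h4 := (hqbox i hi j).1
    have h5 := (hqbox i hi j).2
    have hm1 : lo i j ≤ min (q i hi j) (hb i j - u) := le_min h4 (by linarith)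
    have hm2 : min (q i hi j) (hb i j - u) + u ≤ hb i j := by
      have := min_le_right (q i hi j) (hb i j - u)
      linarith
    exact ⟨by linarith, by linarith⟩
  have hCmeas : ∀ i, i ∈ P → MeasurableSet (C i) := by
    intro i hi
    rw [hC]
    simp only [dif_pos hi]
    rw [← IsometryEquiv.preimage_symm (f i)]
    exact (stmt12_boxMeas _ _).preimage (f i).symm.continuous.measurable
  have hCvol : ∀ i, i ∈ P → MeasureTheory.volume (C i) = ENNReal.ofReal u ^ d := by
    intro i hi
    rw [hC]
    simp only [dif_pos hi]
    rw [← IsometryEquiv.preimage_symm (f i)]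
    rw [(stmt12_isomMP (f i).symm).measure_preimage
      (stmt12_boxMeas (fun j => min (q i hi j) (hb i j - u))
        (fun j => min (q i hi j) (hb i j - u) + u)).nullMeasurableSet]
    rw [stmt12_volBox]
    simp only [add_sub_cancel_left]
    rw [Finset.prod_const, Finset.card_univ, Fintype.card_fin]
  have hBig : ∀ i, i ∈ P → C i ⊆ cube d x' R := by
    intro i hi
    rw [hC]
    simp only [dif_pos hi]
    rintro z ⟨y, hy, rfl⟩
    have hqmem : ∀ j, min (q i hi j) (hb i j - u) ≤ q i hi j ∧
        q i hi j ≤ min (q i hi j) (hb i j - u) + u := by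
      intro j
      refine ⟨min_le_left _ _, ?_⟩
      rcases le_total (q i hi j) (hb i j - u) with h | h
      · rw [min_eq_left h]; linarith
      · rw [min_eq_right h]; linarith [(hqbox i hi j).2]
    have hdistyq : dist ((f i) y) (p i hi) ≤ Real.sqrt d * u := by
      rw [← hqf i hi, (f i).dist_eq]
      refine stmt12_distBound y (q i hi) u hu0.le ?_
      intro j
      have h1 := (hy j).1
      have h2 := (hy j).2
      have h3 := (hqmem j).1
      have h4 := (hqmem j).2
      rw [abs_le]
      constructor <;> linarith
    intro j
    have hcd := (stmt12_coordDist ((f i) y) (p i hi) j).trans hdistyq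
    have hp1 := (hpc i hi j).1
    have hp2 := (hpc i hi j).2
    have habs := abs_le.1 hcd
    have hxj : x' j = x j - u * Real.sqrt d := rfl
    constructor
    · rw [hxj]; nlinarith [habs.1]
    · rw [hxj, hR]; nlinarith [habs.2]
  -- volume counting
  have hvolBig : MeasureTheory.volume (cube d x' R) = ENNReal.ofReal R ^ d := by
    have h := stmt12_volBox (fun j => x' j) (fun j => x' j + R)
    rw [show cube d x' R = {y : EuclideanSpace ℝ (Fin d) | ∀ j, x' j ≤ y j ∧
      y j ≤ x' j + R} from rfl, h]
    simp only [add_sub_cancel_left]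
    rw [Finset.prod_const, Finset.card_univ, Fintype.card_fin]
  have hpd : (↑P : Set ι).PairwiseDisjoint C := by
    intro i hi j hj hne
    exact Set.disjoint_of_subset (hCsub i hi) (hCsub j hj) (hdisj i hi j hj hne)
  have hcount : (P.card : ENNReal) * ENNReal.ofReal u ^ d ≤ ENNReal.ofReal R ^ d := by
    calc (P.card : ENNReal) * ENNReal.ofReal u ^ d
        = ∑ i ∈ P, MeasureTheory.volume (C i) := by
          rw [Finset.sum_congr rfl (fun i hi => hCvol i hi), Finset.sum_const, nsmul_eq_mul]
      _ = MeasureTheory.volume (⋃ i ∈ P, C i) :=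
          (MeasureTheory.measure_biUnion_finset hpd (fun i hi => hCmeas i hi)).symm
      _ ≤ MeasureTheory.volume (cube d x' R) :=
          MeasureTheory.measure_mono (Set.iUnion₂_subset hBig)
      _ = ENNReal.ofReal R ^ d := hvolBig
  have hreal : (P.card : ℝ) * u ^ d ≤ R ^ d := by
    have h1 : ENNReal.ofReal ((P.card : ℝ) * u ^ d) ≤ ENNReal.ofReal (R ^ d) := by
      rw [ENNReal.ofReal_mul (Nat.cast_nonneg _), ENNReal.ofReal_pow hu0.le,
        ENNReal.ofReal_pow hR0.le, ENNReal.ofReal_natCast]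
      exact hcount
    exact (ENNReal.ofReal_le_ofReal_iff (by positivity)).1 h1
  have hRu : R = ((t + 2) * Real.sqrt d) * u := by
    rw [hR, hu_def]
    field_simp
  have hcard : (P.card : ℝ) ≤ ((t + 2) * Real.sqrt d) ^ d := by
    have h2 : (P.card : ℝ) * u ^ d ≤ ((t + 2) * Real.sqrt d) ^ d * u ^ d := by
      rw [← mul_pow, ← hRu]
      exact hreal
    exact le_of_mul_le_mul_right h2 (pow_pos hu0 d)
  have hfin : ((t + 2) * Real.sqrt d) ^ d ≤ (3 * t * Real.sqrt d) ^ d := by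
    refine pow_le_pow_left₀ (by positivity) ?_ d
    have h3 : t + 2 ≤ 3 * t := by linarith
    exact mul_le_mul_of_nonneg_right h3 (Real.sqrt_nonneg _)
  refine ⟨P.attach.image (fun i => p i.1 i.2), ?_, ?_⟩
  · calc ((P.attach.image (fun i => p i.1 i.2)).card : ℝ)
        ≤ (P.attach.card : ℝ) := by exact_mod_cast Finset.card_image_le
      _ = (P.card : ℝ) := by rw [Finset.card_attach]
      _ ≤ (3 * t * Real.sqrt d) ^ d := hcard.trans hfin
  · intro i hi
    exact ⟨p i hi, Finset.mem_image.2 ⟨⟨i, hi⟩, Finset.mem_attach _ _, rfl⟩, hpO i hi⟩
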